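/- The group of piecewise linear orientation preserving homeomorphisms of [0,1] contains no nonabelian free subgroup. -/

import Mathlib

/-- The unit interval `[0,1]` as a subtype of `ℝ`. -/
abbrev UnitInt : Type := Set.Icc (0 : ℝ) 1

/-- An order preserving self-bijection of `[0,1]` is piecewise linear if
there is a finite set of breakpoints away from which it is affine:
on any subinterval `[a,b]` containing no breakpoint in its interior,
`f` is given by `x ↦ p * x + q`. -/
def IsPL (f : UnitInt ≃o UnitInt) : Prop :=
  ∃ s : Finset ℝ, ∀ a b : UnitInt,
    (∀ c ∈ s, ¬((a : ℝ) < c ∧ c < (b : ℝ))) →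
    ∃ p q : ℝ, ∀ x : UnitInt, a ≤ x → x ≤ b → ((f x : ℝ)) = p * (x : ℝ) + q


open Subgroup
open scoped commutatorElement

private def permP : Equiv.Perm (Fin 5) := c[0,1,2,3,4]
private def permQ : Equiv.Perm (Fin 5) := c[0,1]

private lemma permPQ_ne : permP * permQ ≠ permQ * permP := by decide

/-- distinct generators of a free group do not commute -/
private lemma freeGroup_of_not_commute {ι : Type*} {i j : ι} (hij : i ≠ j) :
    ¬ Commute (FreeGroup.of i) (FreeGroup.of j) := by
  classical
  intro h
  have h' : FreeGroup.of i * FreeGroup.of j = FreeGroup.of j * FreeGroup.of i := h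
  let φ : FreeGroup ι →* Equiv.Perm (Fin 5) :=
    FreeGroup.lift (fun k => if k = i then permP else if k = j then permQ else 1)
  have := congrArg φ h'
  simp only [map_mul, φ, FreeGroup.lift_apply_of, if_pos, if_neg hij.symm, if_neg hij] at this
  exact permPQ_ne this

/-- an abelian free group is cyclic -/
private lemma cyclic_of_free_comm (G : Type*) [Group G] [IsFreeGroup G]
    (hc : ∀ a b : G, Commute a b) : ∃ z : G, ∀ a : G, ∃ n : ℤ, a = z ^ n := by
  obtain ⟨ι, ⟨b⟩⟩ := IsFreeGroup.nonempty_basis (G := G)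
  have e : G ≃* FreeGroup ι := b.repr
  have hsub : Subsingleton ι := by
    constructor
    intro i j
    by_contra hij
    apply freeGroup_of_not_commute hij
    have := hc (e.symm (FreeGroup.of i)) (e.symm (FreeGroup.of j))
    have h2 := congrArg e this
    simpa [Commute, SemiconjBy] using h2
  rcases isEmpty_or_nonempty ι with hι | ⟨⟨i₀⟩⟩
  · refine ⟨1, fun a => ⟨0, ?_⟩⟩
    have : ∀ w : FreeGroup ι, w = 1 := by
      intro w
      induction w with
      | C1 => rfl
      | of x => exact isEmptyElim x
      | inv_of x _ => exact isEmptyElim x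
      | mul x y hx hy => rw [hx, hy, one_mul]
    have := this (e a)
    have := congrArg e.symm this
    simpa using this
  · refine ⟨e.symm (FreeGroup.of i₀), fun a => ?_⟩
    have : ∀ w : FreeGroup ι, ∃ n : ℤ, w = (FreeGroup.of i₀) ^ n := by
      intro w
      induction w with
      | C1 => exact ⟨0, rfl⟩
      | of x => exact ⟨1, by rw [Subsingleton.elim x i₀, zpow_one]⟩
      | inv_of x _ => exact ⟨-1, by rw [Subsingleton.elim x i₀, zpow_neg, zpow_one]⟩
      | mul x y hx hy =>
          obtain ⟨m, rfl⟩ := hx; obtain ⟨n, rfl⟩ := hy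
          exact ⟨m + n, (zpow_add _ _ _).symm⟩
    obtain ⟨n, hn⟩ := this (e a)
    refine ⟨n, ?_⟩
    have := congrArg e.symm hn
    simpa [map_zpow] using this

/-- two commuting elements of a free group lie in a common cyclic subgroup -/
private lemma commute_mem_zpowers {G : Type u} [Group G] [IsFreeGroup G] {u v : G}
    (h : Commute u v) : ∃ z : G, u ∈ zpowers z ∧ v ∈ zpowers z := by
  classical
  set A : Subgroup G := closure {u, v} with hA
  have hsubc : ({u, v} : Set G) ⊆ (Subgroup.centralizer {u, v} : Set G) := by
    rintro a (rfl | rfl) <;> rw [SetLike.mem_coe, mem_centralizer_iff] <;>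
      rintro b (rfl | rfl)
    · rfl
    · exact h.symm.eq
    · exact h.eq
    · rfl
  have hAc : ∀ a b : A, Commute a b := by
    rintro ⟨a, ha⟩ ⟨c, hc⟩
    have hac : a ∈ Subgroup.centralizer {u, v} := (closure_le _).2 hsubc ha
    have hsub2 : ({u, v} : Set G) ⊆ (Subgroup.centralizer {a} : Set G) := by
      rintro b hb
      rw [SetLike.mem_coe, mem_centralizer_iff]
      rintro d rfl
      exact (Subgroup.mem_centralizer_iff.1 hac b hb).symm
    have hcc : c ∈ Subgroup.centralizer {a} := (closure_le _).2 hsub2 hc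
    have h3 : a * c = c * a := (Subgroup.mem_centralizer_iff.1 hcc a rfl)
    show (⟨a, ha⟩ * ⟨c, hc⟩ : A) = ⟨c, hc⟩ * ⟨a, ha⟩
    exact Subtype.ext h3
  obtain ⟨z, hz⟩ := cyclic_of_free_comm A hAc
  have hu : u ∈ A := subset_closure (by simp)
  have hv : v ∈ A := subset_closure (by simp)
  obtain ⟨m, hm⟩ := hz ⟨u, hu⟩
  obtain ⟨n, hn⟩ := hz ⟨v, hv⟩
  refine ⟨(z : G), ⟨m, ?_⟩, ⟨n, ?_⟩⟩
  · have := congrArg (Subtype.val) hm; simpa using this.symm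
  · have := congrArg (Subtype.val) hn; simpa using this.symm

/-- a free group has torsion-free abelianization, in the following form -/
private lemma free_ab_torsionfree (G : Type u) [Group G] [IsFreeGroup G] (a : G) (n : ℤ)
    (hn : n ≠ 0) (h : Abelianization.of (a ^ n) = 1) : Abelianization.of a = 1 := by
  obtain ⟨ι, ⟨b⟩⟩ := IsFreeGroup.nonempty_basis (G := G)
  have e : G ≃* FreeGroup ι := b.repr
  set ψ : Abelianization G → (ι →₀ ℤ) := fun c =>
    FreeAbelianGroup.equivFinsupp ι (Additive.ofMul (e.abelianizationCongr c)) with hψ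
  have hψinj : Function.Injective ψ := by
    intro c d hcd
    exact e.abelianizationCongr.injective
      (Additive.ofMul.injective ((FreeAbelianGroup.equivFinsupp ι).injective hcd))
  have hψmul : ∀ c d : Abelianization G, ψ (c * d) = ψ c + ψ d := by
    intro c d; simp [hψ]; exact map_add (FreeAbelianGroup.equivFinsupp ι) _ _
  have hψzpow : ∀ (c : Abelianization G) (m : ℤ), ψ (c ^ m) = m • ψ c := by
    intro c m; simp [hψ]; exact map_zsmul (FreeAbelianGroup.equivFinsupp ι) _ _
  have h1 : ψ (Abelianization.of (a ^ n)) = n • ψ (Abelianization.of a) := by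
    rw [map_zpow]; exact hψzpow _ _
  rw [h] at h1
  have h0 : ψ 1 = 0 := by simp [hψ]; exact map_zero _
  rw [h0] at h1
  have : ψ (Abelianization.of a) = 0 := by
    rcases smul_eq_zero.1 h1.symm with h' | h'
    · exact absurd (by exact_mod_cast h') hn
    · exact h'
  apply hψinj
  rw [this, h0]

/-- a perfect free group is trivial -/
private lemma free_perfect_trivial (G : Type u) [Group G] [IsFreeGroup G]
    (h : ∀ a : G, Abelianization.of a = 1) : ∀ a : G, a = 1 := by
  obtain ⟨ι, ⟨b⟩⟩ := IsFreeGroup.nonempty_basis (G := G)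
  have e : G ≃* FreeGroup ι := b.repr
  have hι : IsEmpty ι := by
    by_contra hne
    rw [not_isEmpty_iff] at hne
    obtain ⟨i⟩ := hne
    have h1 : Abelianization.of (e.symm (FreeGroup.of i)) = 1 := h _
    have h2 := congrArg (fun c => (FreeAbelianGroup.equivFinsupp ι)
      (Additive.ofMul (e.abelianizationCongr c))) h1
    simp only [_root_.abelianizationCongr_of, MulEquiv.apply_symm_apply] at h2
    have h3 : (FreeAbelianGroup.equivFinsupp ι) (FreeAbelianGroup.of i) = Finsupp.single i 1 := by
      rw [show ((FreeAbelianGroup.equivFinsupp ι) (FreeAbelianGroup.of i))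
        = FreeAbelianGroup.toFinsupp (FreeAbelianGroup.of i) from rfl, FreeAbelianGroup.toFinsupp_of]
    have h4 : (Additive.ofMul (Abelianization.of (FreeGroup.of i)) : FreeAbelianGroup ι)
        = FreeAbelianGroup.of i := rfl
    rw [h4, h3] at h2
    have h5 : (FreeAbelianGroup.equivFinsupp ι)
        (Additive.ofMul (e.abelianizationCongr 1)) = 0 := by simp; exact map_zero _
    rw [h5] at h2
    exact (one_ne_zero : (1:ℤ) ≠ 0) (Finsupp.single_eq_zero.1 h2)
  intro a
  have : ∀ w : FreeGroup ι, w = 1 := by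
    intro w
    induction w with
    | C1 => rfl
    | of x => exact isEmptyElim x
    | inv_of x _ => exact isEmptyElim x
    | mul x y hx hy => rw [hx, hy, one_mul]
  have := congrArg e.symm (this (e a))
  simpa using this

/-- The key group-theoretic fact: in a free group, if `x ≠ 1`, `H` is the normal closure
of `x`, and `y ∈ ⁅H,H⁆` is nontrivial, then no conjugate of `x` commutes with `y`. -/
private theorem key_group_fact {G : Type u} [Group G] [IsFreeGroup G] (x y g : G)
    (hx : x ≠ 1)
    (hy : y ∈ ⁅Subgroup.normalClosure ({x} : Set G), Subgroup.normalClosure ({x} : Set G)⁆)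
    (hy1 : y ≠ 1) : ¬ Commute (g * x * g⁻¹) y := by
  classical
  intro hcom
  set H : Subgroup G := Subgroup.normalClosure ({x} : Set G) with hH
  set u : G := g * x * g⁻¹ with hu
  have hu1 : u ≠ 1 := by
    simp only [hu, ne_eq, conj_eq_one_iff]; exact hx
  -- common cyclic subgroup
  obtain ⟨z, ⟨m, hm⟩, ⟨n, hn⟩⟩ := commute_mem_zpowers hcom
  have hmz : z ^ m = u := hm
  have hnz : z ^ n = y := hn
  have hm0 : m ≠ 0 := by rintro rfl; exact hu1 (by simpa using hmz.symm)
  have hn0 : n ≠ 0 := by rintro rfl; exact hy1 (by simpa using hnz.symm)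
  -- the subgroup of exponents landing in H
  set S : AddSubgroup ℤ :=
    { carrier := {k : ℤ | z ^ k ∈ H}
      zero_mem' := by simp [Subgroup.one_mem]
      add_mem' := by intro a b ha hb; simp only [Set.mem_setOf_eq, zpow_add] at *;
                     exact H.mul_mem ha hb
      neg_mem' := by intro a ha; simp only [Set.mem_setOf_eq, zpow_neg] at *;
                     exact H.inv_mem ha } with hS
  have hxH : x ∈ H := Subgroup.subset_normalClosure rfl
  have huH : u ∈ H := (Subgroup.normalClosure_normal).conj_mem x hxH g
  have hyH : y ∈ H := commutator_le_left H H hy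
  have hmS : m ∈ S := by show z ^ m ∈ H; rw [hmz]; exact huH
  have hnS : n ∈ S := by show z ^ n ∈ H; rw [hnz]; exact hyH
  obtain ⟨k, hk⟩ := Int.subgroup_cyclic S
  have hmk : ∃ m' : ℤ, m' • k = m := by
    rw [← AddSubgroup.mem_closure_singleton, ← hk]; exact hmS
  have hnk : ∃ n' : ℤ, n' • k = n := by
    rw [← AddSubgroup.mem_closure_singleton, ← hk]; exact hnS
  obtain ⟨m', hm'⟩ := hmk
  obtain ⟨n', hn'⟩ := hnk
  have hk0 : k ≠ 0 := by rintro rfl; rw [smul_zero] at hm'; exact hm0 hm'.symm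
  have hn'0 : n' ≠ 0 := by rintro rfl; rw [zero_smul] at hn'; exact hn0 hn'.symm
  set w : G := z ^ k with hw
  have hwH : w ∈ H := by
    have : k ∈ S := by rw [hk]; exact AddSubgroup.mem_closure_singleton.2 ⟨1, one_smul _ _⟩
    exact this
  -- pass to the subgroup H, which is free
  have hyw : y = w ^ n' := by
    rw [← hnz, hw, ← zpow_mul, mul_comm k n', ← smul_eq_mul, hn']
  have huw : u = w ^ m' := by
    rw [← hmz, hw, ← zpow_mul, mul_comm k m', ← smul_eq_mul, hm']
  -- yH ∈ commutator H
  have hmap : Subgroup.map H.subtype (_root_.commutator H) = ⁅H, H⁆ := by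
    rw [commutator_def, Subgroup.map_commutator]
    congr 1 <;> rw [← MonoidHom.range_eq_map, Subgroup.range_subtype]
  have hyC : (⟨y, hyH⟩ : H) ∈ _root_.commutator H := by
    rw [← hmap] at hy
    obtain ⟨y', hy', hyy⟩ := hy
    have : y' = (⟨y, hyH⟩ : H) := Subtype.ext hyy
    rwa [this] at hy'
  -- torsion-freeness in the abelianization of H forces w ∈ ⁅H,H⁆
  haveI : IsFreeGroup H := inferInstance
  have haby : Abelianization.of (⟨y, hyH⟩ : H) = 1 :=
    (QuotientGroup.eq_one_iff _).2 hyC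
  have hywH : (⟨y, hyH⟩ : H) = (⟨w, hwH⟩ : H) ^ n' := by
    apply Subtype.ext; push_cast; exact hyw
  have habw : Abelianization.of (⟨w, hwH⟩ : H) = 1 := by
    apply free_ab_torsionfree H _ n' hn'0
    rw [← hywH]; exact haby
  have hwC : (⟨w, hwH⟩ : H) ∈ _root_.commutator H := (QuotientGroup.eq_one_iff _).1 habw
  have hwHH : w ∈ ⁅H, H⁆ := by
    rw [← hmap]; exact ⟨_, hwC, rfl⟩
  have huHH : u ∈ ⁅H, H⁆ := by rw [huw]; exact Subgroup.zpow_mem _ hwHH m'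
  -- hence x ∈ ⁅H,H⁆, so H = ⁅H,H⁆ and H is perfect, contradiction
  haveI : (⁅H, H⁆ : Subgroup G).Normal := Subgroup.commutator_normal H H
  have hxHH : x ∈ ⁅H, H⁆ := by
    have := (Subgroup.commutator_normal H H).conj_mem u huHH g⁻¹
    simpa [hu, mul_assoc] using this
  have hHle : H ≤ ⁅H, H⁆ := by
    rw [hH]
    exact Subgroup.normalClosure_le_normal (by simpa using hxHH)
  have hperf : ∀ a : H, Abelianization.of a = 1 := by
    rintro ⟨a, haH⟩
    apply (QuotientGroup.eq_one_iff _).2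
    have : a ∈ ⁅H, H⁆ := hHle haH
    rw [← hmap] at this
    obtain ⟨a', ha', haa⟩ := this
    have : a' = (⟨a, haH⟩ : H) := Subtype.ext haa
    rwa [this] at ha'
  have := free_perfect_trivial H hperf ⟨x, hxH⟩
  exact hx (by simpa using congrArg Subtype.val this)





abbrev F2 := FreeGroup (Fin 2)
variable (f : F2 →* (UnitInt ≃o UnitInt))

/-- the set of points fixed by the whole group -/
def FixAll : Set ℝ :=
  {s : ℝ | ∃ hs : s ∈ Set.Icc (0:ℝ) 1, ∀ w : F2, f w ⟨s, hs⟩ = ⟨s, hs⟩}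

lemma fix_apply {s : ℝ} (h : s ∈ FixAll f) (hs : s ∈ Set.Icc (0:ℝ) 1) (w : F2) :
    f w ⟨s, hs⟩ = ⟨s, hs⟩ := by
  obtain ⟨hs', h'⟩ := h
  exact h' w

lemma fix_mem_Icc {s : ℝ} (h : s ∈ FixAll f) : s ∈ Set.Icc (0:ℝ) 1 := h.1

lemma fg_comp (v w : F2) (t : UnitInt) : f (v * w) t = f v (f w t) := by
  rw [map_mul]; rfl

lemma fg_inv_left (w : F2) (t : UnitInt) : f w⁻¹ (f w t) = t := by
  rw [map_inv]; exact (f w).symm_apply_apply t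

lemma fg_inv_right (w : F2) (t : UnitInt) : f w (f w⁻¹ t) = t := by
  rw [map_inv]; exact (f w).apply_symm_apply t

lemma zero_mem_fix : (0 : ℝ) ∈ FixAll f := by
  refine ⟨⟨le_refl 0, zero_le_one⟩, fun w => ?_⟩
  have h1 : (⟨0, ⟨le_refl 0, zero_le_one⟩⟩ : UnitInt) ≤ f w⁻¹ ⟨0, ⟨le_refl 0, zero_le_one⟩⟩ :=
    (f w⁻¹ _).2.1
  have h2 := (f w).monotone h1
  rw [fg_inv_right] at h2
  exact le_antisymm h2 ((f w _).2.1)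

lemma one_mem_fix : (1 : ℝ) ∈ FixAll f := by
  refine ⟨⟨zero_le_one, le_refl 1⟩, fun w => ?_⟩
  have h1 : f w⁻¹ ⟨1, ⟨zero_le_one, le_refl 1⟩⟩ ≤ ⟨1, ⟨zero_le_one, le_refl 1⟩⟩ :=
    (f w⁻¹ _).2.2
  have h2 := (f w).monotone h1
  rw [fg_inv_right] at h2
  exact le_antisymm ((f w _).2.2) h2

noncomputable def gapL (t : UnitInt) : ℝ := sSup (FixAll f ∩ Set.Iic (t : ℝ))
noncomputable def gapR (t : UnitInt) : ℝ := sInf (FixAll f ∩ Set.Ici (t : ℝ))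

lemma gapL_set_nonempty (t : UnitInt) : (FixAll f ∩ Set.Iic (t : ℝ)).Nonempty :=
  ⟨0, zero_mem_fix f, t.2.1⟩

lemma gapL_set_bdd (t : UnitInt) : BddAbove (FixAll f ∩ Set.Iic (t : ℝ)) :=
  ⟨(t : ℝ), fun s hs => hs.2⟩

lemma gapR_set_nonempty (t : UnitInt) : (FixAll f ∩ Set.Ici (t : ℝ)).Nonempty :=
  ⟨1, one_mem_fix f, t.2.2⟩

lemma gapR_set_bdd (t : UnitInt) : BddBelow (FixAll f ∩ Set.Ici (t : ℝ)) :=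
  ⟨(t : ℝ), fun s hs => hs.2⟩

lemma gapL_le (t : UnitInt) : gapL f t ≤ (t : ℝ) :=
  csSup_le (gapL_set_nonempty f t) (fun s hs => hs.2)

lemma le_gapR (t : UnitInt) : (t : ℝ) ≤ gapR f t :=
  le_csInf (gapR_set_nonempty f t) (fun s hs => hs.2)

lemma gapL_nonneg (t : UnitInt) : 0 ≤ gapL f t :=
  le_csSup (gapL_set_bdd f t) ⟨zero_mem_fix f, t.2.1⟩

lemma gapR_le_one (t : UnitInt) : gapR f t ≤ 1 :=
  csInf_le (gapR_set_bdd f t) ⟨one_mem_fix f, t.2.2⟩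

lemma gapL_mem_Icc (t : UnitInt) : gapL f t ∈ Set.Icc (0:ℝ) 1 :=
  ⟨gapL_nonneg f t, le_trans (gapL_le f t) t.2.2⟩

lemma gapR_mem_Icc (t : UnitInt) : gapR f t ∈ Set.Icc (0:ℝ) 1 :=
  ⟨le_trans t.2.1 (le_gapR f t), gapR_le_one f t⟩

lemma gapL_mem_fix (t : UnitInt) : gapL f t ∈ FixAll f := by
  refine ⟨gapL_mem_Icc f t, fun w => ?_⟩
  set u := gapL f t with hu
  have key : ∀ w' : F2, u ≤ (f w' ⟨u, gapL_mem_Icc f t⟩ : ℝ) := by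
    intro w'
    apply csSup_le (gapL_set_nonempty f t)
    intro s hs
    have hsu : s ≤ u := le_csSup (gapL_set_bdd f t) hs
    have : f w' ⟨s, fix_mem_Icc f hs.1⟩ ≤ f w' ⟨u, gapL_mem_Icc f t⟩ :=
      (f w').monotone (by exact hsu)
    rw [fix_apply f hs.1 _ w'] at this
    exact this
  have h1 := key w
  have h2 := key w⁻¹
  have h3 : (⟨u, gapL_mem_Icc f t⟩ : UnitInt) ≤ f w⁻¹ ⟨u, gapL_mem_Icc f t⟩ := h2
  have h4 := (f w).monotone h3
  rw [fg_inv_right] at h4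
  exact le_antisymm h4 h1

lemma gapR_mem_fix (t : UnitInt) : gapR f t ∈ FixAll f := by
  refine ⟨gapR_mem_Icc f t, fun w => ?_⟩
  set v := gapR f t with hv
  have key : ∀ w' : F2, (f w' ⟨v, gapR_mem_Icc f t⟩ : ℝ) ≤ v := by
    intro w'
    apply le_csInf (gapR_set_nonempty f t)
    intro s hs
    have hsv : v ≤ s := csInf_le (gapR_set_bdd f t) hs
    have : f w' ⟨v, gapR_mem_Icc f t⟩ ≤ f w' ⟨s, fix_mem_Icc f hs.1⟩ :=
      (f w').monotone (by exact hsv)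
    rw [fix_apply f hs.1 _ w'] at this
    exact this
  have h1 := key w
  have h2 := key w⁻¹
  have h3 : f w⁻¹ ⟨v, gapR_mem_Icc f t⟩ ≤ ⟨v, gapR_mem_Icc f t⟩ := h2
  have h4 := (f w).monotone h3
  rw [fg_inv_right] at h4
  exact le_antisymm h1 h4

lemma gapL_lt {t : UnitInt} (ht : (t : ℝ) ∉ FixAll f) : gapL f t < t :=
  lt_of_le_of_ne (gapL_le f t) (fun h => ht (h ▸ gapL_mem_fix f t))

lemma lt_gapR {t : UnitInt} (ht : (t : ℝ) ∉ FixAll f) : (t : ℝ) < gapR f t :=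
  lt_of_le_of_ne (le_gapR f t) (fun h => ht (h ▸ gapR_mem_fix f t))

lemma gap_no_fix (t : UnitInt) {s : ℝ} (hs : s ∈ FixAll f)
    (h1 : gapL f t < s) (h2 : s < gapR f t) : False := by
  rcases le_total s (t : ℝ) with h | h
  · exact absurd (le_csSup (gapL_set_bdd f t) ⟨hs, h⟩) (not_le.2 h1)
  · exact absurd (csInf_le (gapR_set_bdd f t) ⟨hs, h⟩) (not_le.2 h2)

/-- points strictly inside the gap of `t` have the same gap -/
lemma same_gapL (t t' : UnitInt) (h1 : gapL f t < (t' : ℝ)) (h2 : (t' : ℝ) < gapR f t) :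
    gapL f t' = gapL f t := by
  apply le_antisymm
  · apply csSup_le (gapL_set_nonempty f t')
    rintro s ⟨hsf, hst'⟩
    by_contra hc
    push_neg at hc
    exact gap_no_fix f t hsf hc (lt_of_le_of_lt hst' h2)
  · exact le_csSup (gapL_set_bdd f t') ⟨gapL_mem_fix f t, le_of_lt h1⟩

lemma same_gapR (t t' : UnitInt) (h1 : gapL f t < (t' : ℝ)) (h2 : (t' : ℝ) < gapR f t) :
    gapR f t' = gapR f t := by
  apply le_antisymm
  · exact csInf_le (gapR_set_bdd f t') ⟨gapR_mem_fix f t, le_of_lt h2⟩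
  · apply le_csInf (gapR_set_nonempty f t')
    rintro s ⟨hsf, hst'⟩
    by_contra hc
    push_neg at hc
    exact gap_no_fix f t hsf (lt_of_lt_of_le h1 hst') hc

/-- every group element maps the open gap of `t` into itself -/
lemma gap_invariant (t : UnitInt) (w : F2) (t' : UnitInt)
    (h1 : gapL f t < (t' : ℝ)) (h2 : (t' : ℝ) < gapR f t) :
    gapL f t < (f w t' : ℝ) ∧ (f w t' : ℝ) < gapR f t := by
  constructor
  · have : f w ⟨gapL f t, gapL_mem_Icc f t⟩ < f w t' := by
      apply (f w).strictMono
      exact Subtype.mk_lt_mk.2 h1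
    rw [fix_apply f (gapL_mem_fix f t)] at this
    exact this
  · have : f w t' < f w ⟨gapR f t, gapR_mem_Icc f t⟩ := by
      apply (f w).strictMono
      exact Subtype.mk_lt_mk.2 h2
    rw [fix_apply f (gapR_mem_fix f t)] at this
    exact this

/-- existence of a right affine germ at a fixed point -/
lemma exists_right_germ (hPL : ∀ w : F2, IsPL (f w)) {c : ℝ} (hc : c ∈ FixAll f)
    (hc1 : c < 1) (w : F2) :
    ∃ p : ℝ, 0 < p ∧ ∃ ε : ℝ, 0 < ε ∧ c + ε ≤ 1 ∧
      ∀ t : UnitInt, c ≤ (t : ℝ) → (t : ℝ) ≤ c + ε → (f w t : ℝ) = c + p * ((t : ℝ) - c) := by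
  classical
  obtain ⟨s, hs⟩ := hPL w
  set T := s.filter (fun r => c < r) with hT
  set ε : ℝ := if h : T.Nonempty then min (T.min' h - c) (1 - c) else 1 - c with hε
  have hεpos : 0 < ε := by
    rw [hε]
    split_ifs with h
    · refine lt_min ?_ (by linarith)
      have := (Finset.mem_filter.1 (T.min'_mem h)).2
      linarith
    · linarith
  have hε1 : c + ε ≤ 1 := by
    rw [hε]; split_ifs with h
    · have := min_le_right (T.min' h - c) (1 - c); linarith
    · linarith
  have hcIcc : c ∈ Set.Icc (0:ℝ) 1 := fix_mem_Icc f hc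
  have hbIcc : c + ε ∈ Set.Icc (0:ℝ) 1 := ⟨by have := hcIcc.1; linarith, hε1⟩
  have hnob : ∀ r ∈ s, ¬(c < r ∧ r < c + ε) := by
    rintro r hr ⟨hr1, hr2⟩
    have hrT : r ∈ T := Finset.mem_filter.2 ⟨hr, by simpa using hr1⟩
    have hne : T.Nonempty := ⟨r, hrT⟩
    have hmin : T.min' hne ≤ r := T.min'_le r hrT
    rw [hε] at hr2
    rw [dif_pos hne] at hr2
    have := min_le_left (T.min' hne - c) (1 - c)
    linarith
  obtain ⟨p, q, hpq⟩ := hs ⟨c, hcIcc⟩ ⟨c + ε, hbIcc⟩ hnob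
  have hcb : (⟨c,hcIcc⟩ : UnitInt) ≤ ⟨c+ε,hbIcc⟩ := Subtype.mk_le_mk.2 (by linarith)
  have hatc : (f w ⟨c, hcIcc⟩ : ℝ) = p * c + q := hpq _ (le_refl _) hcb
  rw [fix_apply f hc] at hatc
  have hatb : (f w ⟨c + ε, hbIcc⟩ : ℝ) = p * (c + ε) + q := hpq _ hcb (le_refl _)
  have hlt : f w ⟨c, hcIcc⟩ < f w ⟨c + ε, hbIcc⟩ :=
    (f w).strictMono (Subtype.mk_lt_mk.2 (by linarith))
  have hlt' : (f w ⟨c, hcIcc⟩ : ℝ) < (f w ⟨c + ε, hbIcc⟩ : ℝ) := hlt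
  rw [fix_apply f hc] at hlt'
  rw [hatb] at hlt'
  have hppos : 0 < p := by nlinarith
  refine ⟨p, hppos, ε, hεpos, hε1, fun t ht1 ht2 => ?_⟩
  have := hpq t (Subtype.mk_le_mk.2 ht1) (Subtype.mk_le_mk.2 ht2)
  rw [this]
  have hq : q = c - p * c := by linarith [hatc]
  rw [hq]; ring

/-- uniqueness of the right germ slope -/
lemma right_germ_unique {c : ℝ} (hc : c ∈ Set.Icc (0:ℝ) 1) (w : F2)
    {p p' ε ε' : ℝ} (hε : 0 < ε) (hε1 : c + ε ≤ 1) (hε' : 0 < ε') (hε1' : c + ε' ≤ 1)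
    (h : ∀ t : UnitInt, c ≤ (t : ℝ) → (t : ℝ) ≤ c + ε → (f w t : ℝ) = c + p * ((t : ℝ) - c))
    (h' : ∀ t : UnitInt, c ≤ (t : ℝ) → (t : ℝ) ≤ c + ε' → (f w t : ℝ) = c + p' * ((t : ℝ) - c)) :
    p = p' := by
  set m := min ε ε' with hm
  have hmpos : 0 < m := lt_min hε hε'
  have hmem : c + m ∈ Set.Icc (0:ℝ) 1 := by
    constructor
    · linarith [hc.1]
    · have h1 : m ≤ ε := min_le_left _ _
      linarith
  have e1 := h ⟨c + m, hmem⟩ (by simp; linarith) (by simp; linarith [min_le_left ε ε'])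
  have e2 := h' ⟨c + m, hmem⟩ (by simp; linarith) (by simp; linarith [min_le_right ε ε'])
  rw [e1] at e2
  have : p * m = p' * m := by
    have : c + m - c = m := by ring
    rw [this] at e2; linarith
  have := mul_right_cancel₀ (ne_of_gt hmpos) this
  exact this

/-- the right germ slope, as a function -/
noncomputable def rslope (hPL : ∀ w : F2, IsPL (f w)) {c : ℝ} (hc : c ∈ FixAll f)
    (hc1 : c < 1) (w : F2) : ℝ :=
  Classical.choose (exists_right_germ f hPL hc hc1 w)

lemma rslope_spec (hPL : ∀ w : F2, IsPL (f w)) {c : ℝ} (hc : c ∈ FixAll f)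
    (hc1 : c < 1) (w : F2) :
    0 < rslope f hPL hc hc1 w ∧ ∃ ε : ℝ, 0 < ε ∧ c + ε ≤ 1 ∧
      ∀ t : UnitInt, c ≤ (t : ℝ) → (t : ℝ) ≤ c + ε →
        (f w t : ℝ) = c + rslope f hPL hc hc1 w * ((t : ℝ) - c) :=
  Classical.choose_spec (exists_right_germ f hPL hc hc1 w)

lemma rslope_eq_of_germ (hPL : ∀ w : F2, IsPL (f w)) {c : ℝ} (hc : c ∈ FixAll f)
    (hc1 : c < 1) (w : F2) {p ε : ℝ} (hε : 0 < ε) (hε1 : c + ε ≤ 1)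
    (h : ∀ t : UnitInt, c ≤ (t : ℝ) → (t : ℝ) ≤ c + ε → (f w t : ℝ) = c + p * ((t : ℝ) - c)) :
    rslope f hPL hc hc1 w = p := by
  obtain ⟨hp, ε', hε', hε1', h'⟩ := rslope_spec f hPL hc hc1 w
  exact right_germ_unique f (fix_mem_Icc f hc) w hε' hε1' hε hε1 h' h

lemma rslope_one (hPL : ∀ w : F2, IsPL (f w)) {c : ℝ} (hc : c ∈ FixAll f) (hc1 : c < 1) :
    rslope f hPL hc hc1 1 = 1 := by
  apply rslope_eq_of_germ f hPL hc hc1 1 (by linarith : (0:ℝ) < 1 - c) (by linarith)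
  intro t _ _
  rw [map_one]
  show (t : ℝ) = c + 1 * ((t : ℝ) - c)
  ring

lemma rslope_mul (hPL : ∀ w : F2, IsPL (f w)) {c : ℝ} (hc : c ∈ FixAll f) (hc1 : c < 1)
    (v w : F2) :
    rslope f hPL hc hc1 (v * w) = rslope f hPL hc hc1 v * rslope f hPL hc hc1 w := by
  obtain ⟨hpv, εv, hεv, hεv1, hv⟩ := rslope_spec f hPL hc hc1 v
  obtain ⟨hpw, εw, hεw, hεw1, hw⟩ := rslope_spec f hPL hc hc1 w
  set pv := rslope f hPL hc hc1 v
  set pw := rslope f hPL hc hc1 w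
  set δ := min εw (εv / pw) with hδ
  have hδpos : 0 < δ := lt_min hεw (div_pos hεv hpw)
  have hδ1 : c + δ ≤ 1 := by
    have : δ ≤ εw := min_le_left _ _; linarith
  apply rslope_eq_of_germ f hPL hc hc1 (v*w) hδpos hδ1
  intro t ht1 ht2
  rw [fg_comp]
  have hwt : (f w t : ℝ) = c + pw * ((t : ℝ) - c) :=
    hw t ht1 (by have : δ ≤ εw := min_le_left _ _; linarith)
  have h1 : c ≤ (f w t : ℝ) := by nlinarith
  have h2 : (f w t : ℝ) ≤ c + εv := by
    have hδ2 : δ ≤ εv / pw := min_le_right _ _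
    have : (t : ℝ) - c ≤ εv / pw := by linarith
    have := mul_le_mul_of_nonneg_left this (le_of_lt hpw)
    rw [mul_div_cancel₀ _ (ne_of_gt hpw)] at this
    linarith [hwt]
  have := hv (f w t) h1 h2
  rw [this, hwt]
  ring

lemma rslope_pos (hPL : ∀ w : F2, IsPL (f w)) {c : ℝ} (hc : c ∈ FixAll f) (hc1 : c < 1)
    (w : F2) : 0 < rslope f hPL hc hc1 w := (rslope_spec f hPL hc hc1 w).1

/-- elements of the commutator subgroup are the identity on a right neighbourhood
of a globally fixed point -/
lemma commutator_right_germ (hPL : ∀ w : F2, IsPL (f w)) {c : ℝ} (hc : c ∈ FixAll f)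
    (hc1 : c < 1) {y : F2} (hy : y ∈ ⁅(⊤ : Subgroup F2), (⊤ : Subgroup F2)⁆) :
    ∃ ε : ℝ, 0 < ε ∧ c + ε ≤ 1 ∧
      ∀ t : UnitInt, c ≤ (t : ℝ) → (t : ℝ) ≤ c + ε → f y t = t := by
  set K : Subgroup F2 :=
    { carrier := {w : F2 | rslope f hPL hc hc1 w = 1}
      one_mem' := rslope_one f hPL hc hc1
      mul_mem' := by
        intro a b ha hb
        simp only [Set.mem_setOf_eq] at *
        rw [rslope_mul f hPL hc hc1, ha, hb, mul_one]
      inv_mem' := by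
        intro a ha
        simp only [Set.mem_setOf_eq] at *
        have h1 : rslope f hPL hc hc1 (a * a⁻¹) = 1 := by
          have e : a * a⁻¹ = 1 := mul_inv_cancel a
          rw [e]; exact rslope_one f hPL hc hc1
        rw [rslope_mul f hPL hc hc1, ha, one_mul] at h1
        exact h1 } with hK
  have hle : ⁅(⊤ : Subgroup F2), (⊤ : Subgroup F2)⁆ ≤ K := by
    rw [Subgroup.commutator_le]
    intro g₁ _ g₂ _
    show rslope f hPL hc hc1 ⁅g₁, g₂⁆ = 1
    rw [commutatorElement_def]
    rw [rslope_mul f hPL hc hc1, rslope_mul f hPL hc hc1, rslope_mul f hPL hc hc1]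
    have i1 : rslope f hPL hc hc1 g₁ * rslope f hPL hc hc1 g₁⁻¹ = 1 := by
      rw [← rslope_mul f hPL hc hc1]
      have e : g₁ * g₁⁻¹ = 1 := mul_inv_cancel g₁
      rw [e]; exact rslope_one f hPL hc hc1
    have i2 : rslope f hPL hc hc1 g₂ * rslope f hPL hc hc1 g₂⁻¹ = 1 := by
      rw [← rslope_mul f hPL hc hc1]
      have e : g₂ * g₂⁻¹ = 1 := mul_inv_cancel g₂
      rw [e]; exact rslope_one f hPL hc hc1
    nlinarith [rslope_pos f hPL hc hc1 g₁, rslope_pos f hPL hc hc1 g₂,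
      rslope_pos f hPL hc hc1 g₁⁻¹, rslope_pos f hPL hc hc1 g₂⁻¹]
  have hy1 : rslope f hPL hc hc1 y = 1 := hle hy
  obtain ⟨hp, ε, hε, hε1, h⟩ := rslope_spec f hPL hc hc1 y
  refine ⟨ε, hε, hε1, fun t ht1 ht2 => ?_⟩
  have := h t ht1 ht2
  rw [hy1, one_mul] at this
  apply Subtype.ext
  rw [this]; ring

/-- existence of a left affine germ at a fixed point -/
lemma exists_left_germ (hPL : ∀ w : F2, IsPL (f w)) {c : ℝ} (hc : c ∈ FixAll f)
    (hc0 : 0 < c) (w : F2) :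
    ∃ p : ℝ, 0 < p ∧ ∃ ε : ℝ, 0 < ε ∧ 0 ≤ c - ε ∧
      ∀ t : UnitInt, c - ε ≤ (t : ℝ) → (t : ℝ) ≤ c → (f w t : ℝ) = c + p * ((t : ℝ) - c) := by
  classical
  obtain ⟨s, hs⟩ := hPL w
  set T := s.filter (fun r => r < c) with hT
  set ε : ℝ := if h : T.Nonempty then min (c - T.max' h) c else c with hε
  have hεpos : 0 < ε := by
    rw [hε]
    split_ifs with h
    · refine lt_min ?_ hc0
      have := (Finset.mem_filter.1 (T.max'_mem h)).2
      linarith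
    · exact hc0
  have hε0 : 0 ≤ c - ε := by
    rw [hε]; split_ifs with h
    · have := min_le_right (c - T.max' h) c; linarith
    · linarith
  have hcIcc : c ∈ Set.Icc (0:ℝ) 1 := fix_mem_Icc f hc
  have haIcc : c - ε ∈ Set.Icc (0:ℝ) 1 := ⟨hε0, by have := hcIcc.2; linarith⟩
  have hnob : ∀ r ∈ s, ¬(c - ε < r ∧ r < c) := by
    rintro r hr ⟨hr1, hr2⟩
    have hrT : r ∈ T := Finset.mem_filter.2 ⟨hr, by simpa using hr2⟩
    have hne : T.Nonempty := ⟨r, hrT⟩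
    have hmax : r ≤ T.max' hne := T.le_max' r hrT
    rw [hε] at hr1
    rw [dif_pos hne] at hr1
    have := min_le_left (c - T.max' hne) c
    linarith
  obtain ⟨p, q, hpq⟩ := hs ⟨c - ε, haIcc⟩ ⟨c, hcIcc⟩ hnob
  have hab : (⟨c - ε,haIcc⟩ : UnitInt) ≤ ⟨c,hcIcc⟩ := Subtype.mk_le_mk.2 (by linarith)
  have hatc : (f w ⟨c, hcIcc⟩ : ℝ) = p * c + q := hpq _ hab (le_refl _)
  rw [fix_apply f hc] at hatc
  have hata : (f w ⟨c - ε, haIcc⟩ : ℝ) = p * (c - ε) + q := hpq _ (le_refl _) hab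
  have hlt : f w ⟨c - ε, haIcc⟩ < f w ⟨c, hcIcc⟩ :=
    (f w).strictMono (Subtype.mk_lt_mk.2 (by linarith))
  have hlt' : (f w ⟨c - ε, haIcc⟩ : ℝ) < (f w ⟨c, hcIcc⟩ : ℝ) := hlt
  rw [fix_apply f hc] at hlt'
  rw [hata] at hlt'
  have hppos : 0 < p := by nlinarith
  refine ⟨p, hppos, ε, hεpos, hε0, fun t ht1 ht2 => ?_⟩
  have := hpq t (Subtype.mk_le_mk.2 ht1) (Subtype.mk_le_mk.2 ht2)
  rw [this]
  have hq : q = c - p * c := by linarith [hatc]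
  rw [hq]; ring

lemma left_germ_unique {c : ℝ} (hc : c ∈ Set.Icc (0:ℝ) 1) (w : F2)
    {p p' ε ε' : ℝ} (hε : 0 < ε) (hε1 : 0 ≤ c - ε) (hε' : 0 < ε') (hε1' : 0 ≤ c - ε')
    (h : ∀ t : UnitInt, c - ε ≤ (t : ℝ) → (t : ℝ) ≤ c → (f w t : ℝ) = c + p * ((t : ℝ) - c))
    (h' : ∀ t : UnitInt, c - ε' ≤ (t : ℝ) → (t : ℝ) ≤ c → (f w t : ℝ) = c + p' * ((t : ℝ) - c)) :
    p = p' := by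
  set m := min ε ε' with hm
  have hmpos : 0 < m := lt_min hε hε'
  have hmem : c - m ∈ Set.Icc (0:ℝ) 1 := by
    constructor
    · have h1 : m ≤ ε := min_le_left _ _
      linarith
    · have := hc.2; linarith
  have e1 := h ⟨c - m, hmem⟩ (by simp; linarith [min_le_left ε ε']) (by simp; linarith)
  have e2 := h' ⟨c - m, hmem⟩ (by simp; linarith [min_le_right ε ε']) (by simp; linarith)
  rw [e1] at e2
  have hmm : c - m - c = -m := by ring
  rw [hmm] at e2
  have : p * m = p' * m := by linarith
  exact mul_right_cancel₀ (ne_of_gt hmpos) this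

noncomputable def lslope (hPL : ∀ w : F2, IsPL (f w)) {c : ℝ} (hc : c ∈ FixAll f)
    (hc0 : 0 < c) (w : F2) : ℝ :=
  Classical.choose (exists_left_germ f hPL hc hc0 w)

lemma lslope_spec (hPL : ∀ w : F2, IsPL (f w)) {c : ℝ} (hc : c ∈ FixAll f)
    (hc0 : 0 < c) (w : F2) :
    0 < lslope f hPL hc hc0 w ∧ ∃ ε : ℝ, 0 < ε ∧ 0 ≤ c - ε ∧
      ∀ t : UnitInt, c - ε ≤ (t : ℝ) → (t : ℝ) ≤ c →
        (f w t : ℝ) = c + lslope f hPL hc hc0 w * ((t : ℝ) - c) :=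
  Classical.choose_spec (exists_left_germ f hPL hc hc0 w)

lemma lslope_eq_of_germ (hPL : ∀ w : F2, IsPL (f w)) {c : ℝ} (hc : c ∈ FixAll f)
    (hc0 : 0 < c) (w : F2) {p ε : ℝ} (hε : 0 < ε) (hε1 : 0 ≤ c - ε)
    (h : ∀ t : UnitInt, c - ε ≤ (t : ℝ) → (t : ℝ) ≤ c → (f w t : ℝ) = c + p * ((t : ℝ) - c)) :
    lslope f hPL hc hc0 w = p := by
  obtain ⟨hp, ε', hε', hε1', h'⟩ := lslope_spec f hPL hc hc0 w
  exact left_germ_unique f (fix_mem_Icc f hc) w hε' hε1' hε hε1 h' h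

lemma lslope_one (hPL : ∀ w : F2, IsPL (f w)) {c : ℝ} (hc : c ∈ FixAll f) (hc0 : 0 < c) :
    lslope f hPL hc hc0 1 = 1 := by
  apply lslope_eq_of_germ f hPL hc hc0 1 hc0 (by linarith)
  intro t _ _
  rw [map_one]
  show (t : ℝ) = c + 1 * ((t : ℝ) - c)
  ring

lemma lslope_mul (hPL : ∀ w : F2, IsPL (f w)) {c : ℝ} (hc : c ∈ FixAll f) (hc0 : 0 < c)
    (v w : F2) :
    lslope f hPL hc hc0 (v * w) = lslope f hPL hc hc0 v * lslope f hPL hc hc0 w := by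
  obtain ⟨hpv, εv, hεv, hεv1, hv⟩ := lslope_spec f hPL hc hc0 v
  obtain ⟨hpw, εw, hεw, hεw1, hw⟩ := lslope_spec f hPL hc hc0 w
  set pv := lslope f hPL hc hc0 v
  set pw := lslope f hPL hc hc0 w
  set δ := min εw (εv / pw) with hδ
  have hδpos : 0 < δ := lt_min hεw (div_pos hεv hpw)
  have hδ1 : 0 ≤ c - δ := by
    have : δ ≤ εw := min_le_left _ _; linarith
  apply lslope_eq_of_germ f hPL hc hc0 (v*w) hδpos hδ1
  intro t ht1 ht2
  rw [fg_comp]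
  have hwt : (f w t : ℝ) = c + pw * ((t : ℝ) - c) :=
    hw t (by have : δ ≤ εw := min_le_left _ _; linarith) ht2
  have h1 : (f w t : ℝ) ≤ c := by nlinarith
  have h2 : c - εv ≤ (f w t : ℝ) := by
    have hδ2 : δ ≤ εv / pw := min_le_right _ _
    have hh : -(εv / pw) ≤ (t : ℝ) - c := by linarith
    have := mul_le_mul_of_nonneg_left hh (le_of_lt hpw)
    rw [mul_neg, mul_div_cancel₀ _ (ne_of_gt hpw)] at this
    linarith [hwt]
  have := hv (f w t) h2 h1
  rw [this, hwt]
  ring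

lemma lslope_pos (hPL : ∀ w : F2, IsPL (f w)) {c : ℝ} (hc : c ∈ FixAll f) (hc0 : 0 < c)
    (w : F2) : 0 < lslope f hPL hc hc0 w := (lslope_spec f hPL hc hc0 w).1

lemma commutator_left_germ (hPL : ∀ w : F2, IsPL (f w)) {c : ℝ} (hc : c ∈ FixAll f)
    (hc0 : 0 < c) {y : F2} (hy : y ∈ ⁅(⊤ : Subgroup F2), (⊤ : Subgroup F2)⁆) :
    ∃ ε : ℝ, 0 < ε ∧ 0 ≤ c - ε ∧
      ∀ t : UnitInt, c - ε ≤ (t : ℝ) → (t : ℝ) ≤ c → f y t = t := by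
  set K : Subgroup F2 :=
    { carrier := {w : F2 | lslope f hPL hc hc0 w = 1}
      one_mem' := lslope_one f hPL hc hc0
      mul_mem' := by
        intro a b ha hb
        simp only [Set.mem_setOf_eq] at *
        rw [lslope_mul f hPL hc hc0, ha, hb, mul_one]
      inv_mem' := by
        intro a ha
        simp only [Set.mem_setOf_eq] at *
        have h1 : lslope f hPL hc hc0 (a * a⁻¹) = 1 := by
          have e : a * a⁻¹ = 1 := mul_inv_cancel a
          rw [e]; exact lslope_one f hPL hc hc0
        rw [lslope_mul f hPL hc hc0, ha, one_mul] at h1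
        exact h1 } with hK
  have hle : ⁅(⊤ : Subgroup F2), (⊤ : Subgroup F2)⁆ ≤ K := by
    rw [Subgroup.commutator_le]
    intro g₁ _ g₂ _
    show lslope f hPL hc hc0 ⁅g₁, g₂⁆ = 1
    rw [commutatorElement_def]
    rw [lslope_mul f hPL hc hc0, lslope_mul f hPL hc hc0, lslope_mul f hPL hc hc0]
    have i1 : lslope f hPL hc hc0 g₁ * lslope f hPL hc hc0 g₁⁻¹ = 1 := by
      rw [← lslope_mul f hPL hc hc0]
      have e : g₁ * g₁⁻¹ = 1 := mul_inv_cancel g₁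
      rw [e]; exact lslope_one f hPL hc hc0
    have i2 : lslope f hPL hc hc0 g₂ * lslope f hPL hc hc0 g₂⁻¹ = 1 := by
      rw [← lslope_mul f hPL hc hc0]
      have e : g₂ * g₂⁻¹ = 1 := mul_inv_cancel g₂
      rw [e]; exact lslope_one f hPL hc hc0
    nlinarith [lslope_pos f hPL hc hc0 g₁, lslope_pos f hPL hc hc0 g₂,
      lslope_pos f hPL hc hc0 g₁⁻¹, lslope_pos f hPL hc hc0 g₂⁻¹]
  have hy1 : lslope f hPL hc hc0 y = 1 := hle hy
  obtain ⟨hp, ε, hε, hε1, h⟩ := lslope_spec f hPL hc hc0 y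
  refine ⟨ε, hε, hε1, fun t ht1 ht2 => ?_⟩
  have := h t ht1 ht2
  rw [hy1, one_mul] at this
  apply Subtype.ext
  rw [this]; ring

/-- the support of a commutator-subgroup element is bounded away from the ends of a gap -/
lemma supp_bounds (hPL : ∀ w : F2, IsPL (f w)) {y : F2}
    (hy : y ∈ ⁅(⊤ : Subgroup F2), (⊤ : Subgroup F2)⁆) (t : UnitInt)
    (ht : (t : ℝ) ∉ FixAll f) :
    ∃ α β : ℝ, gapL f t < α ∧ α < gapR f t ∧ gapL f t < β ∧ β < gapR f t ∧
      ∀ t' : UnitInt, gapL f t < (t' : ℝ) → (t' : ℝ) < gapR f t → f y t' ≠ t' →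
        α ≤ (t' : ℝ) ∧ (t' : ℝ) ≤ β := by
  set u := gapL f t with hu
  set v := gapR f t with hv
  have hut : u < t := gapL_lt f ht
  have htv : (t : ℝ) < v := lt_gapR f ht
  have hu1 : u < 1 := lt_of_lt_of_le hut t.2.2
  have hv0 : 0 < v := lt_of_le_of_lt t.2.1 htv
  obtain ⟨ε₁, hε₁, hε₁1, h₁⟩ := commutator_right_germ f hPL (gapL_mem_fix f t) hu1 hy
  obtain ⟨ε₂, hε₂, hε₂0, h₂⟩ := commutator_left_germ f hPL (gapR_mem_fix f t) hv0 hy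
  refine ⟨min (u + ε₁) ((u + v)/2), max (v - ε₂) ((u + v)/2), ?_, ?_, ?_, ?_, ?_⟩
  · apply lt_min (by linarith) (by linarith)
  · exact lt_of_le_of_lt (min_le_right _ _) (by linarith)
  · exact lt_of_lt_of_le (by linarith : u < (u+v)/2) (le_max_right _ _)
  · apply max_lt (by linarith) (by linarith)
  · intro t' h1 h2 hmoved
    constructor
    · by_contra hcon
      push_neg at hcon
      apply hmoved
      apply h₁ t' (le_of_lt h1)
      have : (t' : ℝ) < u + ε₁ := lt_of_lt_of_le hcon (min_le_left _ _)
      linarith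
    · by_contra hcon
      push_neg at hcon
      apply hmoved
      apply h₂ t' _ (le_of_lt h2)
      have : v - ε₂ < (t' : ℝ) := lt_of_le_of_lt (le_max_left _ _) hcon
      linarith

/-- the group pushes any point of a gap arbitrarily close to the right end of the gap -/
lemma exists_push (t : UnitInt) (ht : (t : ℝ) ∉ FixAll f) {α β : ℝ}
    (hαu : gapL f t < α) (hαv : α < gapR f t) (hβv : β < gapR f t)
    (hαIcc : α ∈ Set.Icc (0:ℝ) 1) :
    ∃ g : F2, β < (f g ⟨α, hαIcc⟩ : ℝ) := by
  set S : Set ℝ := Set.range (fun g : F2 => (f g ⟨α, hαIcc⟩ : ℝ)) with hS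
  have hSne : S.Nonempty := ⟨(f 1 ⟨α, hαIcc⟩ : ℝ), ⟨1, rfl⟩⟩
  have hSbdd : BddAbove S := by
    refine ⟨1, ?_⟩
    rintro r ⟨g, rfl⟩
    exact (f g _).2.2
  set M := sSup S with hM
  have hα1 : (f 1 ⟨α, hαIcc⟩ : ℝ) = α := by rw [map_one]; rfl
  have hαM : α ≤ M := by
    rw [← hα1]
    exact le_csSup hSbdd ⟨1, rfl⟩
  have hMv : gapR f t ≤ M := by
    by_contra hcon
    push_neg at hcon
    have hMIcc : M ∈ Set.Icc (0:ℝ) 1 := by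
      constructor
      · linarith [hαIcc.1]
      · apply csSup_le hSne
        rintro r ⟨g, rfl⟩
        exact (f g _).2.2
    have hMfix : M ∉ FixAll f := by
      intro hfix
      exact gap_no_fix f t hfix (lt_of_lt_of_le hαu hαM) hcon
    have hmoved : ∃ w : F2, f w ⟨M, hMIcc⟩ ≠ ⟨M, hMIcc⟩ := by
      by_contra hcon2
      push_neg at hcon2
      exact hMfix ⟨hMIcc, hcon2⟩
    obtain ⟨w₀, hw₀⟩ := hmoved
    have hw₁ : ∃ w₁ : F2, (⟨M, hMIcc⟩ : UnitInt) < f w₁ ⟨M, hMIcc⟩ := by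
      rcases lt_or_gt_of_ne hw₀ with h | h
      · refine ⟨w₀⁻¹, ?_⟩
        have := (f w₀⁻¹).strictMono h
        rw [fg_inv_left] at this
        exact this
      · exact ⟨w₀, h⟩
    obtain ⟨w₁, hw₁⟩ := hw₁
    set t₀ := f w₁⁻¹ ⟨M, hMIcc⟩ with ht₀
    have ht₀M : (t₀ : ℝ) < M := by
      have := (f w₁⁻¹).strictMono hw₁
      rw [fg_inv_left] at this
      exact this
    obtain ⟨r, ⟨g, hg⟩, hr⟩ := exists_lt_of_lt_csSup hSne (lt_of_lt_of_le ht₀M (le_refl M))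
    have hgt : t₀ < f g ⟨α, hαIcc⟩ := by
      rw [← hg] at hr
      exact Subtype.mk_lt_mk.2 hr
    have hbig : (⟨M, hMIcc⟩ : UnitInt) < f w₁ (f g ⟨α, hαIcc⟩) := by
      have := (f w₁).strictMono hgt
      rw [fg_inv_right] at this
      exact this
    have hle : (f (w₁ * g) ⟨α, hαIcc⟩ : ℝ) ≤ M := le_csSup hSbdd ⟨w₁ * g, rfl⟩
    rw [fg_comp] at hle
    exact absurd hle (not_le.2 hbig)
  obtain ⟨r, ⟨g, hg⟩, hr⟩ := exists_lt_of_lt_csSup hSne (lt_of_lt_of_le hβv hMv)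
  exact ⟨g, by rw [← hg] at hr; exact hr⟩

/-- the support of a PL commutator-subgroup element meets only finitely many gaps -/
lemma exists_cover (hPL : ∀ w : F2, IsPL (f w)) {y : F2}
    (hy : y ∈ ⁅(⊤ : Subgroup F2), (⊤ : Subgroup F2)⁆) :
    ∃ U : Finset ℝ, ∀ t : UnitInt, f y t ≠ t → gapL f t ∈ U := by
  classical
  obtain ⟨s, hs⟩ := hPL y
  refine ⟨s.image (fun r => if h : r ∈ Set.Icc (0:ℝ) 1 then gapL f ⟨r, h⟩ else 0), ?_⟩
  intro t hmoved
  have ht : (t : ℝ) ∉ FixAll f := by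
    intro hfix
    exact hmoved (fix_apply f hfix t.2 y)
  set u := gapL f t with hu
  set v := gapR f t with hv
  have hut : u < t := gapL_lt f ht
  have htv : (t : ℝ) < v := lt_gapR f ht
  have hu1 : u < 1 := lt_of_lt_of_le hut t.2.2
  have hbreak : ∃ r ∈ s, u < r ∧ r < v := by
    by_contra hcon
    push_neg at hcon
    have hnob : ∀ r ∈ s, ¬(u < r ∧ r < v) := by
      rintro r hr ⟨h1, h2⟩
      exact absurd h2 (not_lt.2 (hcon r hr h1))
    obtain ⟨p, q, hpq⟩ := hs ⟨u, gapL_mem_Icc f t⟩ ⟨v, gapR_mem_Icc f t⟩ hnob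
    obtain ⟨ε₁, hε₁, hε₁1, h₁⟩ := commutator_right_germ f hPL (gapL_mem_fix f t) hu1 hy
    set ρ := min (u + ε₁) ((t : ℝ)) with hρ
    have hρu : u < ρ := lt_min (by linarith) hut
    have hρIcc : ρ ∈ Set.Icc (0:ℝ) 1 := by
      constructor
      · linarith [(gapL_mem_Icc f t).1]
      · exact le_trans (min_le_right _ _) t.2.2
    have hρv : ρ ≤ v := le_trans (min_le_right _ _) (le_of_lt htv)
    have hρfix : f y ⟨ρ, hρIcc⟩ = ⟨ρ, hρIcc⟩ :=
      h₁ _ (le_of_lt hρu) (min_le_left _ _)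
    have e1 : (f y ⟨u, gapL_mem_Icc f t⟩ : ℝ) = p * u + q :=
      hpq _ (le_refl _) (Subtype.mk_le_mk.2 (by linarith))
    rw [fix_apply f (gapL_mem_fix f t)] at e1
    have e2 : (f y ⟨ρ, hρIcc⟩ : ℝ) = p * ρ + q :=
      hpq _ (Subtype.mk_le_mk.2 (le_of_lt hρu)) (Subtype.mk_le_mk.2 hρv)
    rw [hρfix] at e2
    have hp1 : p = 1 := by
      have hkey : p * (ρ - u) = ρ - u := by push_cast at e1 e2 ⊢; nlinarith
      have hne : ρ - u ≠ 0 := ne_of_gt (by linarith)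
      have := mul_right_cancel₀ hne (by rw [hkey, one_mul] : p * (ρ - u) = 1 * (ρ - u))
      exact this
    have hq0 : q = 0 := by
      rw [hp1] at e1; push_cast at e1; linarith
    have : (f y t : ℝ) = (t : ℝ) := by
      have := hpq t (Subtype.mk_le_mk.2 (le_of_lt hut)) (Subtype.mk_le_mk.2 (le_of_lt htv))
      rw [this, hp1, hq0]; ring
    exact hmoved (Subtype.ext this)
  obtain ⟨r, hr, hr1, hr2⟩ := hbreak
  have hrIcc : r ∈ Set.Icc (0:ℝ) 1 := by
    constructor
    · linarith [(gapL_mem_Icc f t).1]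
    · linarith [gapR_le_one f t]
  apply Finset.mem_image.2
  refine ⟨r, hr, ?_⟩
  rw [dif_pos hrIcc]
  exact same_gapL f t ⟨r, hrIcc⟩ hr1 hr2

lemma oi_eq_one {g : UnitInt ≃o UnitInt} (h : ∀ t : UnitInt, g t = t) : g = 1 := by
  have : ∀ t, g t = (1 : UnitInt ≃o UnitInt) t := h
  exact DFunLike.ext g 1 this

def permP' : Equiv.Perm (Fin 5) := c[0,1,2,3,4]
def permQ' : Equiv.Perm (Fin 5) := c[0,1]

set_option maxRecDepth 20000 in
theorem main_theorem :
    ¬∃ f : F2 →* (UnitInt ≃o UnitInt),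
      Function.Injective f ∧ ∀ w : F2, IsPL (f w) := by
  rintro ⟨f, hinj, hPL⟩
  classical
  have hmoved : ∀ y : F2, y ≠ 1 → ∃ t : UnitInt, f y t ≠ t := by
    intro y hy1
    by_contra hcon
    push_neg at hcon
    have : f y = 1 := oi_eq_one hcon
    rw [← map_one f] at this
    exact hy1 (hinj this)
  set a : F2 := FreeGroup.of 0 with ha
  set b : F2 := FreeGroup.of 1 with hb
  set x : F2 := ⁅a, b⁆ with hxdef
  set y₀ : F2 := ⁅x, a * x * a⁻¹⁆ with hy₀def
  set φ : F2 →* Equiv.Perm (Fin 5) := FreeGroup.lift ![permP', permQ'] with hφ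
  have hφa : φ a = permP' := by rw [ha, hφ, FreeGroup.lift_apply_of]; rfl
  have hφb : φ b = permQ' := by rw [hb, hφ, FreeGroup.lift_apply_of]; rfl
  have hφx : φ x = permP' * permQ' * permP'⁻¹ * permQ'⁻¹ := by
    rw [hxdef, commutatorElement_def, map_mul, map_mul, map_mul, map_inv, map_inv, hφa, hφb]
  have hx1 : x ≠ 1 := by
    intro h
    have : φ x = 1 := by rw [h, map_one]
    rw [hφx] at this
    revert this
    decide
  have hy₀1 : y₀ ≠ 1 := by
    intro h
    have : φ y₀ = 1 := by rw [h, map_one]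
    have e : φ y₀ = φ x * (φ a * φ x * (φ a)⁻¹) * (φ x)⁻¹ * (φ a * φ x * (φ a)⁻¹)⁻¹ := by
      rw [hy₀def, commutatorElement_def]
      simp only [map_mul, map_inv]
    rw [e, hφa, hφx] at this
    revert this
    decide
  set H : Subgroup F2 := Subgroup.normalClosure {x} with hH
  haveI : H.Normal := Subgroup.normalClosure_normal
  have hxH : x ∈ H := Subgroup.subset_normalClosure rfl
  have hy₀H : y₀ ∈ ⁅H, H⁆ := by
    apply Subgroup.commutator_mem_commutator hxH
    exact ‹H.Normal›.conj_mem x hxH a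
  have hHtop : ⁅H, H⁆ ≤ ⁅(⊤ : Subgroup F2), (⊤ : Subgroup F2)⁆ :=
    Subgroup.commutator_mono le_top le_top
  have hxtop : x ∈ ⁅(⊤ : Subgroup F2), (⊤ : Subgroup F2)⁆ :=
    Subgroup.commutator_mem_commutator (Subgroup.mem_top a) (Subgroup.mem_top b)
  have main : ∀ n : ℕ, ∀ y : F2, y ∈ ⁅H, H⁆ → y ≠ 1 →
      ∀ U : Finset ℝ, U.card ≤ n → (∀ t : UnitInt, f y t ≠ t → gapL f t ∈ U) → False := by
    intro n
    induction n with
    | zero =>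
      intro y hyH hy1 U hcard hcover
      obtain ⟨t, ht⟩ := hmoved y hy1
      have hmem := hcover t ht
      rw [Nat.le_zero, Finset.card_eq_zero] at hcard
      rw [hcard] at hmem
      exact Finset.notMem_empty _ hmem
    | succ n ih =>
      intro y hyH hy1 U hcard hcover
      obtain ⟨t₀, ht₀⟩ := hmoved y hy1
      have ht₀fix : (t₀ : ℝ) ∉ FixAll f := fun hfix => ht₀ (fix_apply f hfix t₀.2 y)
      set u := gapL f t₀ with hu
      set v := gapR f t₀ with hv
      have huv : u < v := lt_trans (gapL_lt f ht₀fix) (lt_gapR f ht₀fix)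
      obtain ⟨αx, βx, hαxu, hαxv, hβxu, hβxv, hx_supp⟩ := supp_bounds f hPL hxtop t₀ ht₀fix
      obtain ⟨αy, βy, hαyu, hαyv, hβyu, hβyv, hy_supp⟩ :=
        supp_bounds f hPL (hHtop hyH) t₀ ht₀fix
      set α := min αx αy with hα
      set β := max βx βy with hβ
      have hαu : u < α := lt_min hαxu hαyu
      have hαv : α < v := lt_of_le_of_lt (min_le_left _ _) hαxv
      have hβv : β < v := max_lt hβxv hβyv
      have hαIcc : α ∈ Set.Icc (0:ℝ) 1 := by
        constructor
        · linarith [gapL_nonneg f t₀]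
        · linarith [gapR_le_one f t₀]
      obtain ⟨g, hg⟩ := exists_push f t₀ ht₀fix hαu hαv hβv hαIcc
      set z : F2 := ⁅g * x * g⁻¹, y⁆ with hzdef
      have hzH : z ∈ ⁅H, H⁆ := by
        apply Subgroup.commutator_mem_commutator
        · exact ‹H.Normal›.conj_mem x hxH g
        · exact Subgroup.commutator_le_left H H hyH
      by_cases hz1 : z = 1
      · exact key_group_fact x y g hx1 hyH hy1 (commutatorElement_eq_one_iff_commute.1 hz1)
      · have huU : u ∈ U := hcover t₀ ht₀
        apply ih z hzH hz1 (U.erase u)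
        · rw [Finset.card_erase_of_mem huU]
          omega
        · intro t hmovedz
          have htfix : (t : ℝ) ∉ FixAll f := fun hfix => hmovedz (fix_apply f hfix t.2 z)
          -- (I): gapL f t ∈ U
          have hinU : gapL f t ∈ U := by
            by_contra hnot
            have hyfixgap : ∀ t' : UnitInt, gapL f t < (t' : ℝ) → (t' : ℝ) < gapR f t →
                f y t' = t' := by
              intro t' h1 h2
              by_contra hm
              apply hnot
              have := hcover t' hm
              rwa [same_gapL f t t' h1 h2] at this
            apply hmovedz
            have htin1 : gapL f t < (t : ℝ) := gapL_lt f htfix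
            have htin2 : (t : ℝ) < gapR f t := lt_gapR f htfix
            have hfyt : f y⁻¹ t = t := by
              have h1 := fg_inv_left f y t
              rwa [hyfixgap t htin1 htin2] at h1
            have hzc : f z t = f (g*x*g⁻¹) (f y (f (g*x*g⁻¹)⁻¹ (f y⁻¹ t))) := by
              rw [hzdef, commutatorElement_def, fg_comp, fg_comp, fg_comp]
            rw [hzc, hfyt]
            have ht₂ := gap_invariant f t (g*x*g⁻¹)⁻¹ t htin1 htin2
            rw [hyfixgap _ ht₂.1 ht₂.2, fg_inv_right]
          -- (II): gapL f t ≠ u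
          have hneu : gapL f t ≠ u := by
            intro heq
            have htv : (t : ℝ) < v := by
              by_contra hcon
              push_neg at hcon
              have hle : v ≤ gapL f t :=
                le_csSup (gapL_set_bdd f t) ⟨gapR_mem_fix f t₀, hcon⟩
              rw [heq] at hle
              linarith
            have hut : u < (t : ℝ) := by
              have := gapL_lt f htfix
              rwa [heq] at this
            -- now t is strictly inside the gap (u,v) of t₀
            -- support characterizations
            have hXsupp : ∀ s : UnitInt, u < (s : ℝ) → (s : ℝ) < v →
                f (g*x*g⁻¹) s ≠ s → β < (s : ℝ) := by
              intro s hs1 hs2 hsm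
              have hconj : f (g*x*g⁻¹) s = f g (f x (f g⁻¹ s)) := by
                rw [fg_comp, fg_comp]
              have hsm' : f x (f g⁻¹ s) ≠ f g⁻¹ s := by
                intro hfix2
                apply hsm
                rw [hconj, hfix2, fg_inv_right]
              have hgap' := gap_invariant f t₀ g⁻¹ s hs1 hs2
              have hbounds := hx_supp (f g⁻¹ s) hgap'.1 hgap'.2 hsm'
              have hmono : f g ⟨α, hαIcc⟩ ≤ f g (f g⁻¹ s) := by
                apply (f g).monotone
                apply Subtype.mk_le_mk.2
                exact le_trans (min_le_left _ _) hbounds.1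
              rw [fg_inv_right] at hmono
              calc β < (f g ⟨α, hαIcc⟩ : ℝ) := hg
                _ ≤ (s : ℝ) := hmono
            have hYsupp : ∀ s : UnitInt, u < (s : ℝ) → (s : ℝ) < v →
                f y s ≠ s → α ≤ (s : ℝ) ∧ (s : ℝ) ≤ β := by
              intro s hs1 hs2 hsm
              have := hy_supp s hs1 hs2 hsm
              exact ⟨le_trans (min_le_right _ _) this.1,
                le_trans this.2 (le_max_right _ _)⟩
            -- show f z t = t
            apply hmovedz
            have hzc : f z t = f (g*x*g⁻¹) (f y (f (g*x*g⁻¹)⁻¹ (f y⁻¹ t))) := by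
              rw [hzdef, commutatorElement_def, fg_comp, fg_comp, fg_comp]
            by_cases hYt : f y t = t
            · have hfyt : f y⁻¹ t = t := by
                have h1 := fg_inv_left f y t
                rwa [hYt] at h1
              by_cases hXt : f (g*x*g⁻¹) t = t
              · have hXinv : f (g*x*g⁻¹)⁻¹ t = t := by
                  have h1 := fg_inv_left f (g*x*g⁻¹) t
                  rwa [hXt] at h1
                rw [hzc, hfyt, hXinv, hYt, hXt]
              · set t₂ := f (g*x*g⁻¹)⁻¹ t with ht₂def
                have ht₂gap := gap_invariant f t₀ (g*x*g⁻¹)⁻¹ t hut htv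
                have hXt₂ : f (g*x*g⁻¹) t₂ = t := by
                  rw [ht₂def, fg_inv_right]
                have ht₂m : f (g*x*g⁻¹) t₂ ≠ t₂ := by
                  intro hcontra
                  have h2 : t = t₂ := by rw [← hXt₂, hcontra]
                  apply hXt
                  rw [h2]
                  exact hcontra
                have ht₂β : β < (t₂ : ℝ) := hXsupp t₂ ht₂gap.1 ht₂gap.2 ht₂m
                have ht₂y : f y t₂ = t₂ := by
                  by_contra hm
                  have := (hYsupp t₂ ht₂gap.1 ht₂gap.2 hm).2
                  linarith
                rw [hzc, hfyt, ← ht₂def, ht₂y, hXt₂]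
            · have htαβ := hYsupp t hut htv hYt
              set t₁ := f y⁻¹ t with ht₁def
              have ht₁gap := gap_invariant f t₀ y⁻¹ t hut htv
              have hyt₁ : f y t₁ = t := by
                rw [ht₁def, fg_inv_right]
              have ht₁m : f y t₁ ≠ t₁ := by
                intro hcontra
                have h2 : t = t₁ := by rw [← hyt₁, hcontra]
                apply hYt
                rw [h2]
                exact hcontra
              have ht₁β : (t₁ : ℝ) ≤ β := (hYsupp t₁ ht₁gap.1 ht₁gap.2 ht₁m).2
              have ht₁X : f (g*x*g⁻¹) t₁ = t₁ := by
                by_contra hm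
                exact absurd (hXsupp t₁ ht₁gap.1 ht₁gap.2 hm) (not_lt.2 ht₁β)
              have ht₁Xinv : f (g*x*g⁻¹)⁻¹ t₁ = t₁ := by
                have h1 := fg_inv_left f (g*x*g⁻¹) t₁
                rwa [ht₁X] at h1
              have htX : f (g*x*g⁻¹) t = t := by
                by_contra hm
                have := hXsupp t hut htv hm
                linarith [htαβ.2]
              rw [hzc, ht₁Xinv, hyt₁, htX]
          exact Finset.mem_erase.2 ⟨hneu, hinU⟩
  obtain ⟨U₀, hU₀⟩ := exists_cover f hPL (hHtop hy₀H)
  exact main U₀.card y₀ hy₀H hy₀1 U₀ le_rfl hU₀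

theorem PL_no_free_subgroup :
    ¬∃ f : FreeGroup (Fin 2) →* (UnitInt ≃o UnitInt),
      Function.Injective f ∧ ∀ w : FreeGroup (Fin 2), IsPL (f w) := by
  exact main_theorem
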